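/- An equivalence of categories over the base between opfibrations automatically preserves opcartesian morphisms: if p : X → S and q : Y → S are Grothendieck opfibrations and f : X → Y is a functor over S that is an equivalence of categories, then f sends p-opcartesian morphisms to q-opcartesian morphisms (and hence is an equivalence in the category of opfibrations over S). -/
import Mathlib


open CategoryTheory

variable {X Y S : Type*} [Category X] [Category Y] [Category S]

/-- `φ` is `p`-opcartesian. -/
def IsOpcart (p : X ⥤ S) {x x' : X} (φ : x ⟶ x') : Prop :=
  ∀ (x'' : X) (ψ : x ⟶ x'') (v : p.obj x' ⟶ p.obj x''),
    p.map ψ = p.map φ ≫ v → ∃! χ : x' ⟶ x'', p.map χ = v ∧ φ ≫ χ = ψ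

/-- `p` is a Grothendieck opfibration. -/
def IsOpFib {X S : Type*} [Category X] [Category S] (p : X ⥤ S) : Prop :=
  ∀ (x : X) {s' : S} (u : p.obj x ⟶ s'),
    ∃ (x' : X) (φ : x ⟶ x') (h : p.obj x' = s'),
      IsOpcart p φ ∧ p.map φ ≫ eqToHom h = u

/-- an equivalence of categories over the base between Grothendieck
opfibrations automatically preserves opcartesian morphisms. -/
theorem equivalence_over_base_preserves_opcartesian
    (p : X ⥤ S) (q : Y ⥤ S) (hp : IsOpFib p) (hq : IsOpFib q)
    (f : X ⥤ Y) (hf : f ⋙ q = p) (hequiv : f.IsEquivalence) :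
    ∀ {x x' : X} (φ : x ⟶ x'), IsOpcart p φ → IsOpcart q (f.map φ) := by
  subst hf
  intro x x' φ hφ y'' ψ v hv
  let e := f.asEquivalence
  set x'' := e.inverse.obj y'' with hx''
  let ε : f.obj x'' ≅ y'' := e.counitIso.app y''
  let ψ' : x ⟶ x'' := f.preimage (ψ ≫ ε.inv)
  have hψ' : f.map ψ' = ψ ≫ ε.inv := f.map_preimage _
  have key : (f ⋙ q).map ψ' = (f ⋙ q).map φ ≫ (v ≫ q.map ε.inv) := by
    simp only [Functor.comp_map, hψ', Functor.map_comp, hv, Category.assoc]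
  obtain ⟨χ', ⟨hχ'q, hχ'c⟩, hχ'u⟩ := hφ x'' ψ' (v ≫ q.map ε.inv) key
  refine ⟨f.map χ' ≫ ε.hom, ⟨?_, ?_⟩, ?_⟩
  · have : q.map (f.map χ') = v ≫ q.map ε.inv := hχ'q
    rw [Functor.map_comp, this, Category.assoc, ← Functor.map_comp,
      Iso.inv_hom_id, CategoryTheory.Functor.map_id, Category.comp_id]
  · rw [← Category.assoc, ← Functor.map_comp, hχ'c, hψ', Category.assoc,
      Iso.inv_hom_id, Category.comp_id]
  · intro χ₂ ⟨hχ₂q, hχ₂c⟩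
    have h1 : f.preimage (χ₂ ≫ ε.inv) = χ' := by
      apply hχ'u
      constructor
      · show q.map (f.map _) = _
        rw [f.map_preimage, Functor.map_comp, hχ₂q]
      · apply f.map_injective
        rw [Functor.map_comp, f.map_preimage, hψ', ← Category.assoc, hχ₂c]
    calc χ₂ = f.map (f.preimage (χ₂ ≫ ε.inv)) ≫ ε.hom := by
              rw [f.map_preimage, Category.assoc, Iso.inv_hom_id, Category.comp_id]
      _ = f.map χ' ≫ ε.hom := by rw [h1]
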